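/- arXiv:1705.07559 — 6 statements merged into one kernel-verified Lean document; each statement's English description precedes it below -/
import Mathlib

section
/- Let G be a group, A a commutative group, (E, i, p) a central extension of G by A, s : G → E a set-theoretic section of p with s(1) = 1, and z the normalized 2-cocycle determined by i(z(g₁,g₂)) = s(g₁)s(g₂)s(g₁g₂)⁻¹. Then the map (g,a) ↦ s(g)·i(a) is an equivalence of central extensions from Inc(z) to E. In particular, every central extension of G by A is equivalent to Inc(z) for some normalized 2-cocycle z. -/
/-- A central extension of a group `G` by a commutative group `A`:
`i : A →* E` is injective with central image, `p : E →* G` is surjective,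
and `ker p = range i`. -/
class IsCentralExtension {A E G : Type*} [CommGroup A] [Group E] [Group G]
    (i : A →* E) (p : E →* G) : Prop where
  inj : Function.Injective i
  mem_center : ∀ a : A, i a ∈ Subgroup.center E
  surj : Function.Surjective p
  ker_eq_range : MonoidHom.ker p = MonoidHom.range i

/-- A normalized (measurable is automatic in the discrete case) 2-cocycle on `G`
valued in the trivial `G`-module `A`. -/
structure NormalizedTwoCocycle (G A : Type*) [Group G] [CommGroup A] where
  z : G → G → A
  z_one_right : ∀ g : G, z g 1 = 1
  z_one_left : ∀ g : G, z 1 g = 1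
  cocycle : ∀ g₁ g₂ g₃ : G, z (g₁ * g₂) g₃ * z g₁ g₂ = z g₁ (g₂ * g₃) * z g₂ g₃

/-- The underlying set `G × A` of the incarnated extension `Inc(z)`. -/
@[ext] structure Inc {G A : Type*} [Group G] [CommGroup A]
    (z : NormalizedTwoCocycle G A) where
  g : G
  a : A

/-- The group structure on `Inc(z)`: `(g₁,a₁)·(g₂,a₂) = (g₁g₂, a₁a₂·z(g₁,g₂))`,
with identity `(1,1)`. -/
instance instGroupInc {G A : Type*} [Group G] [CommGroup A] (z : NormalizedTwoCocycle G A) :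
    Group (Inc z) where
  mul x y := ⟨x.g * y.g, x.a * y.a * z.z x.g y.g⟩
  one := ⟨1, 1⟩
  inv x := ⟨x.g⁻¹, x.a⁻¹ * (z.z x.g⁻¹ x.g)⁻¹⟩
  mul_assoc x y w := by
    refine Inc.ext (mul_assoc _ _ _) ?_
    show (x.a * y.a * z.z x.g y.g) * w.a * z.z (x.g * y.g) w.g
        = x.a * (y.a * w.a * z.z y.g w.g) * z.z x.g (y.g * w.g)
    have h := z.cocycle x.g y.g w.g
    calc (x.a * y.a * z.z x.g y.g) * w.a * z.z (x.g * y.g) w.g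
        = (x.a * y.a * w.a) * (z.z (x.g * y.g) w.g * z.z x.g y.g) := by
          simp [mul_assoc, mul_comm, mul_left_comm]
      _ = (x.a * y.a * w.a) * (z.z x.g (y.g * w.g) * z.z y.g w.g) := by rw [h]
      _ = x.a * (y.a * w.a * z.z y.g w.g) * z.z x.g (y.g * w.g) := by
          simp [mul_assoc, mul_comm, mul_left_comm]
  one_mul x := by
    refine Inc.ext (one_mul _) ?_
    show 1 * x.a * z.z 1 x.g = x.a
    rw [z.z_one_left, one_mul, mul_one]
  mul_one x := by
    refine Inc.ext (mul_one _) ?_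
    show x.a * 1 * z.z x.g 1 = x.a
    rw [z.z_one_right, mul_one, mul_one]
  inv_mul_cancel x := by
    refine Inc.ext (inv_mul_cancel _) ?_
    show (x.a⁻¹ * (z.z x.g⁻¹ x.g)⁻¹) * x.a * z.z x.g⁻¹ x.g = 1
    calc (x.a⁻¹ * (z.z x.g⁻¹ x.g)⁻¹) * x.a * z.z x.g⁻¹ x.g
        = (x.a⁻¹ * x.a) * ((z.z x.g⁻¹ x.g)⁻¹ * z.z x.g⁻¹ x.g) := by
          simp [mul_assoc, mul_comm, mul_left_comm]
      _ = 1 := by simp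

/-- The structure map `i(a) = (1,a)` of the incarnated extension `Inc(z)`. -/
def incI {G A : Type*} [Group G] [CommGroup A] (z : NormalizedTwoCocycle G A) :
    A →* Inc z where
  toFun a := ⟨1, a⟩
  map_one' := rfl
  map_mul' a b := by
    refine Inc.ext ?_ ?_
    · show (1 : G) = 1 * 1
      rw [one_mul]
    · show a * b = a * b * z.z 1 1
      rw [z.z_one_left, mul_one]

/-- The structure map `p(g,a) = g` of the incarnated extension `Inc(z)`. -/
def incP {G A : Type*} [Group G] [CommGroup A] (z : NormalizedTwoCocycle G A) :
    Inc z →* G where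
  toFun x := x.g
  map_one' := rfl
  map_mul' x y := rfl

/-- for a central extension `(E,i,p)` of `G` by `A`, a section `s : G → E` of
`p` with `s(1) = 1`, and the normalized 2-cocycle `z` determined by
`i(z(g₁,g₂)) = s(g₁)s(g₂)s(g₁g₂)⁻¹`, the map `(g,a) ↦ s(g)·i(a)` is an equivalence of
central extensions from `Inc(z)` to `E`.  In particular, every central extension of `G`
by `A` is equivalent to `Inc(z')` for some normalized 2-cocycle `z'`. -/
theorem inc_equiv_of_section {G A E : Type*} [Group G] [CommGroup A] [Group E]
    (i : A →* E) (p : E →* G) [IsCentralExtension i p]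
    (s : G → E) (hs : ∀ g : G, p (s g) = g) (hs1 : s 1 = 1)
    (z : NormalizedTwoCocycle G A)
    (hz : ∀ g₁ g₂ : G, i (z.z g₁ g₂) = s g₁ * s g₂ * (s (g₁ * g₂))⁻¹) :
    (∃ φ : Inc z →* E, (∀ x : Inc z, φ x = s x.g * i x.a) ∧
      φ.comp (incI z) = i ∧ p.comp φ = incP z) ∧
    ∃ (z' : NormalizedTwoCocycle G A) (φ : Inc z' →* E),
      φ.comp (incI z') = i ∧ p.comp φ = incP z' := by
  have hcomm : ∀ (a : A) (e : E), i a * e = e * i a := fun a e =>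
    (Subgroup.mem_center_iff.mp (IsCentralExtension.mem_center (p := p) a) e).symm
  have h1 : ∀ g₁ g₂ : G, s (g₁ * g₂) * i (z.z g₁ g₂) = s g₁ * s g₂ := by
    intro g₁ g₂; rw [← hcomm, hz]; group
  let φ : Inc z →* E := {
    toFun := fun x => s x.g * i x.a
    map_one' := by show s (1:G) * i 1 = 1; simp [hs1]
    map_mul' := fun x y => by
      show s (x.g * y.g) * i (x.a * y.a * z.z x.g y.g) = (s x.g * i x.a) * (s y.g * i y.a)
      rw [map_mul, map_mul, ← hcomm (z.z x.g y.g), ← mul_assoc, h1]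
      calc s x.g * s y.g * (i x.a * i y.a)
          = s x.g * ((s y.g * i x.a) * i y.a) := by group
        _ = s x.g * ((i x.a * s y.g) * i y.a) := by rw [hcomm]
        _ = (s x.g * i x.a) * (s y.g * i y.a) := by group }
  have hker : ∀ a : A, p (i a) = 1 := by
    intro a
    have : i a ∈ MonoidHom.ker p := by
      rw [IsCentralExtension.ker_eq_range (i := i)]; exact ⟨a, rfl⟩
    exact this
  have hi : φ.comp (incI z) = i := by
    ext a; show s (1:G) * i a = i a; simp [hs1]
  have hp : p.comp φ = incP z := by
    ext x; show p (s x.g * i x.a) = x.g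
    rw [map_mul, hker, mul_one, hs]
  exact ⟨⟨φ, fun x => rfl, hi, hp⟩, z, φ, hi, hp⟩
end

section
/- Let G be a perfect group with universal central extension (Ẽ, i₀ : C → Ẽ, p₀ : Ẽ → G). Then for every commutative group A, the assignment f ↦ f_*Ẽ (pushout along f) classifies central extensions: for every central extension (E, i, p) of G by A there exists a unique group homomorphism f : C → A such that the pushout f_*Ẽ is equivalent to E. (Thus equivalence classes of central extensions of G by A are in bijection with Hom(C, A), i.e., CExt(G,A) ≅ Hom(π₁(G), A).) -/
universe u

/-- `(Ẽ, i₀, p₀)` is a universal central extension of `G`: it is a central extension of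
`G` by `C`, and for every commutative group `A` and every central extension `(E,i,p)` of
`G` by `A`, there exists a unique homomorphism `φ : Ẽ →* E` lying over the identity of
`G`, i.e. with `p ∘ φ = p₀`. -/
def IsUniversalCentralExtension {G C Et : Type u} [Group G] [CommGroup C] [Group Et]
    (i₀ : C →* Et) (p₀ : Et →* G) : Prop :=
  IsCentralExtension i₀ p₀ ∧
  ∀ (A E : Type u) [CommGroup A] [Group E] (i : A →* E) (p : E →* G),
    IsCentralExtension i p → ∃! φ : Et →* E, p.comp φ = p₀
theorem IsCentralExtension.p_i {A E G : Type*} [CommGroup A] [Group E] [Group G]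
    (i : A →* E) (p : E →* G) [h : IsCentralExtension i p] (a : A) : p (i a) = 1 := by
  rw [← MonoidHom.mem_ker, h.ker_eq_range]
  exact ⟨a, rfl⟩

section Pushout

variable {G A B E : Type*} [Group G] [CommGroup A] [CommGroup B] [Group E]

/-- The subgroup `N = {(f(a), i(a)⁻¹) : a ∈ A}` of `B × E`, along which the
pushout of a central extension `(E, i, p)` of `G` by `A` under `f : A →* B` is formed. -/
def pushN (f : A →* B) (i : A →* E) (p : E →* G) [IsCentralExtension i p] :
    Subgroup (B × E) where
  carrier := {x | ∃ a : A, x = (f a, (i a)⁻¹)}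
  one_mem' := ⟨1, by simp; rfl⟩
  mul_mem' := by
    rintro _ _ ⟨a, rfl⟩ ⟨b, rfl⟩
    refine ⟨a * b, ?_⟩
    have h2 : (i a)⁻¹ * (i b)⁻¹ = (i (a * b))⁻¹ := by
      rw [← mul_inv_rev, ← map_mul, mul_comm b a]
    rw [Prod.mk_mul_mk, ← map_mul, h2]
  inv_mem' := by
    rintro _ ⟨a, rfl⟩
    exact ⟨a⁻¹, by simp⟩

instance pushN_normal {f : A →* B} {i : A →* E} {p : E →* G} [IsCentralExtension i p] :
    (pushN f i p).Normal := by
  constructor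
  rintro n ⟨a, rfl⟩ g
  refine ⟨a, ?_⟩
  have h2 := Subgroup.mem_center_iff.mp
    ((Subgroup.center E).inv_mem (IsCentralExtension.mem_center (i := i) (p := p) a)) g.2
  have : g * (f a, (i a)⁻¹) * g⁻¹ = (f a, (i a)⁻¹) := by
    refine Prod.ext ?_ ?_
    · show g.1 * f a * g.1⁻¹ = f a
      rw [mul_comm g.1 (f a)]
      group
    · show g.2 * (i a)⁻¹ * g.2⁻¹ = (i a)⁻¹
      rw [h2]
      group
  rw [this]

/-- The structure map `i''(b) = [(b,1)]` of the pushout `f_*E = (B × E)/N`. -/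
def pushI (f : A →* B) (i : A →* E) (p : E →* G) [IsCentralExtension i p] :
    B →* (B × E) ⧸ pushN f i p :=
  (QuotientGroup.mk' (pushN f i p)).comp (MonoidHom.inl B E)

/-- The structure map `p''([(b,e)]) = p(e)` of the pushout `f_*E = (B × E)/N`;
it is well defined, being obtained from `QuotientGroup.lift`. -/
def pushP (f : A →* B) (i : A →* E) (p : E →* G) [IsCentralExtension i p] :
    ((B × E) ⧸ pushN f i p) →* G :=
  QuotientGroup.lift (pushN f i p) (p.comp (MonoidHom.snd B E))
    (by
      rintro _ ⟨a, rfl⟩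
      simp only [MonoidHom.mem_ker, MonoidHom.comp_apply, MonoidHom.coe_snd, map_inv]
      rw [IsCentralExtension.p_i i p a, inv_one])

end Pushout

/-- let `G` be a perfect group with universal central extension
`(Ẽ, i₀ : C →* Ẽ, p₀)`.  For every commutative group `A` and every central extension
`(E,i,p)` of `G` by `A`, there is a unique homomorphism `f : C →* A` such that the
pushout `f_*Ẽ` is equivalent to `E`; thus `CExt(G,A) ≅ Hom(π₁(G), A)`. -/
theorem pushout_classifies_central_extensions {G C Et : Type u}
    [Group G] [CommGroup C] [Group Et]
    (hperf : commutator G = ⊤)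
    (i₀ : C →* Et) (p₀ : Et →* G) [IsCentralExtension i₀ p₀]
    (huniv : IsUniversalCentralExtension i₀ p₀)
    {A E : Type u} [CommGroup A] [Group E]
    (i : A →* E) (p : E →* G) [IsCentralExtension i p] :
    ∃! f : C →* A, ∃ φ : ((A × Et) ⧸ pushN f i₀ p₀) →* E,
      φ.comp (pushI f i₀ p₀) = i ∧ p.comp φ = pushP f i₀ p₀ := by
    classical
  obtain ⟨ψ, hψ, hψuniq⟩ := huniv.2 A E i p ‹_›
  have hpψ : ∀ e, p (ψ e) = p₀ e := fun e => congrArg (fun g => g e) hψ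
  have hmem : ∀ c, ψ (i₀ c) ∈ i.range := by
    intro c
    rw [← IsCentralExtension.ker_eq_range (i := i) (p := p), MonoidHom.mem_ker, hpψ]
    exact IsCentralExtension.p_i i₀ p₀ c
  have hiinj : Function.Injective i := IsCentralExtension.inj (p := p)
  let eq : A ≃* i.range := MonoidHom.ofInjective hiinj
  let f : C →* A := eq.symm.toMonoidHom.comp ((ψ.comp i₀).codRestrict i.range hmem)
  have hf : ∀ c, i (f c) = ψ (i₀ c) := by
    intro c
    have : eq (f c) = ⟨ψ (i₀ c), hmem c⟩ := by
      simp [f]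
    have h2 : (eq (f c) : E) = ψ (i₀ c) := by rw [this]
    rw [← h2]
    rfl
  have hcent : ∀ a : A, ∀ x : E, i a * x = x * i a := fun a x =>
    (Subgroup.mem_center_iff.mp (IsCentralExtension.mem_center (i := i) (p := p) a) x).symm
  let θ : A × Et →* E :=
  { toFun := fun x => i x.1 * ψ x.2
    map_one' := by simp
    map_mul' := by
      intro x y
      simp only [Prod.fst_mul, Prod.snd_mul, map_mul]
      rw [mul_assoc, ← mul_assoc (i y.1), hcent y.1 (ψ x.2), mul_assoc (ψ x.2), ← mul_assoc] }
  have hθker : ∀ x ∈ pushN f i₀ p₀, x ∈ MonoidHom.ker θ := by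
    rintro _ ⟨c, rfl⟩
    show i (f c) * ψ (i₀ c)⁻¹ = 1
    rw [hf c, map_inv, mul_inv_cancel]
  refine ⟨f, ⟨QuotientGroup.lift (pushN f i₀ p₀) θ hθker, ?_, ?_⟩, ?_⟩
  · ext a
    show i a * ψ 1 = i a
    simp
  · ext x
    show p (i x.1 * ψ x.2) = p₀ x.2
    rw [map_mul, IsCentralExtension.p_i i p, one_mul, hpψ]
  · rintro f' ⟨φ', h1, h2⟩
    have hψ' : φ'.comp ((QuotientGroup.mk' (pushN f' i₀ p₀)).comp (MonoidHom.inr A Et)) = ψ := by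
      refine hψuniq _ ?_
      ext e
      have := congrArg (fun g => g ((QuotientGroup.mk' (pushN f' i₀ p₀)) (1, e))) h2
      simpa [pushP] using this
    have hψ'' : ∀ e, φ' ((QuotientGroup.mk' (pushN f' i₀ p₀)) (1, e)) = ψ e :=
      fun e => congrArg (fun g => g e) hψ'
    ext c
    apply hiinj
    have hne : ((f' c, (i₀ c)⁻¹) : A × Et) ∈ pushN f' i₀ p₀ := ⟨c, rfl⟩
    have hz : φ' ((QuotientGroup.mk' (pushN f' i₀ p₀)) (f' c, (i₀ c)⁻¹)) = 1 := by
      have h3 : (QuotientGroup.mk' (pushN f' i₀ p₀)) (f' c, (i₀ c)⁻¹) = 1 := by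
        simpa [QuotientGroup.eq_one_iff] using hne
      rw [h3, map_one]
    have hsplit : ((f' c, (i₀ c)⁻¹) : A × Et) = (f' c, 1) * (1, (i₀ c)⁻¹) := by
      simp
    rw [hsplit, map_mul, map_mul] at hz
    have ha : φ' ((QuotientGroup.mk' (pushN f' i₀ p₀)) (f' c, 1)) = i (f' c) := by
      have := congrArg (fun g => g (f' c)) h1
      simpa [pushI] using this
    have hb : φ' ((QuotientGroup.mk' (pushN f' i₀ p₀)) (1, (i₀ c)⁻¹)) = (ψ (i₀ c))⁻¹ := by
      have h4 : ((1, (i₀ c)⁻¹) : A × Et) = ((1, i₀ c) : A × Et)⁻¹ := by simp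
      rw [h4, map_inv, map_inv, hψ'' (i₀ c)]
    rw [ha, hb] at hz
    rw [hf c]
    exact (eq_of_mul_inv_eq_one hz)
end

section
/- (Discrete case of Proposition 1.9, Moore.) Let H and G be groups with universal central extensions (H̃, i_H : C_H → H̃, p_H) and (G̃, i_G : C_G → G̃, p_G), let i : H → G be a group homomorphism, and let i_* : C_H → C_G be the induced homomorphism on kernels (determined by i_G ∘ i_* = ĩ ∘ i_H, where ĩ : H̃ → G̃ is the unique lift of i). For a commutative group A and a homomorphism f : C_G → A, the pullback i*(f_*G̃) of the pushout extension f_*G̃ along i splits (i.e., admits an equivalence to the trivial central extension H × A) if and only if f ∘ i_* is the trivial homomorphism C_H → A. (Thus central extensions of G by A split over H correspond to homomorphisms C_G/i_*(C_H) → A, giving the relative fundamental group π₁(G,H) = π₁(G)/i_*(π₁(H)).) -/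
universe u

section Pullback

variable {H G E A : Type*} [Group H] [Group G] [Group E] [CommGroup A]

/-- The pullback `j*E = {(h,e) ∈ H × E : j(h) = p(e)}` as a subgroup of `H × E`. -/
def pullbackSubgroup (j : H →* G) (p : E →* G) : Subgroup (H × E) where
  carrier := {x | j x.1 = p x.2}
  one_mem' := by simp
  mul_mem' := by
    intro a b ha hb
    simp only [Set.mem_setOf_eq, Prod.fst_mul, Prod.snd_mul, map_mul] at *
    rw [ha, hb]
  inv_mem' := by
    intro a ha
    simp only [Set.mem_setOf_eq, Prod.fst_inv, Prod.snd_inv, map_inv] at *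
    rw [ha]

@[simp] theorem mem_pullbackSubgroup {j : H →* G} {p : E →* G} {x : H × E} :
    x ∈ pullbackSubgroup j p ↔ j x.1 = p x.2 := Iff.rfl

/-- The structure map `a ↦ (1, i(a))` of the pullback. -/
def pullbackI (j : H →* G) (i : A →* E) (p : E →* G) (hpi : ∀ a, p (i a) = 1) :
    A →* ↥(pullbackSubgroup j p) where
  toFun a := ⟨(1, i a), by rw [mem_pullbackSubgroup]; simp [hpi a]⟩
  map_one' := by
    apply Subtype.ext
    simp
  map_mul' a b := by
    apply Subtype.ext
    simp [Prod.ext_iff]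

/-- The structure map `(h,e) ↦ h` of the pullback. -/
def pullbackP (j : H →* G) (p : E →* G) : ↥(pullbackSubgroup j p) →* H :=
  (MonoidHom.fst H E).comp (pullbackSubgroup j p).subtype

end Pullback

theorem pushP_pushI {G A B E : Type*} [Group G] [CommGroup A] [CommGroup B] [Group E]
    (f : A →* B) (i : A →* E) (p : E →* G) [IsCentralExtension i p] (b : B) :
    pushP f i p (pushI f i p b) = 1 :=
  map_one p


section AuxMoore

variable {H G CG Gt Ht A : Type*} [Group H] [Group G] [CommGroup CG] [Group Gt]
  [Group Ht] [CommGroup A]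

theorem trivial_isCentralExtension (H A : Type*) [Group H] [CommGroup A] :
    IsCentralExtension (MonoidHom.inr H A) (MonoidHom.fst H A) where
  inj := fun a b h => by simpa using congrArg Prod.snd h
  mem_center a := by
    rw [Subgroup.mem_center_iff]
    intro g
    ext
    · simp
    · simp [mul_comm]
  surj := fun h => ⟨(h, 1), rfl⟩
  ker_eq_range := by
    ext ⟨h, a⟩
    simp [MonoidHom.mem_ker, Prod.ext_iff, eq_comm, Subgroup.mem_prod]

variable (f : CG →* A) (iG : CG →* Gt) (pG : Gt →* G) [IsCentralExtension iG pG]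

theorem push_mk_eq (a : CG) (b : A) (g : Gt) :
    (QuotientGroup.mk (b, iG a * g) : (A × Gt) ⧸ pushN f iG pG) =
      QuotientGroup.mk (b * f a, g) := by
  rw [QuotientGroup.eq]
  refine ⟨a, ?_⟩
  have hc : Commute g (iG a) := Subgroup.mem_center_iff.mp
    (IsCentralExtension.mem_center (i := iG) (p := pG) a) g
  have h2 : g⁻¹ * ((iG a)⁻¹ * g) = (iG a)⁻¹ := by
    rw [hc.inv_right.eq.symm]
    group
  ext
  · show b⁻¹ * (b * f a) = f a
    group
  · show (iG a * g)⁻¹ * g = (iG a)⁻¹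
    rw [mul_inv_rev, mul_assoc]
    exact h2

theorem pushI_injective : Function.Injective (pushI f iG pG) := by
  intro b b' h
  have h2 : ((b : A), (1 : Gt))⁻¹ * (b', 1) ∈ pushN f iG pG := QuotientGroup.eq.mp h
  obtain ⟨a, ha⟩ := h2
  have ha1 : b⁻¹ * b' = f a := congrArg Prod.fst ha
  have ha2 : ((1 : Gt))⁻¹ * 1 = (iG a)⁻¹ := congrArg Prod.snd ha
  have : iG a = iG 1 := by simpa using ha2.symm
  have ha0 : a = 1 := IsCentralExtension.inj (i := iG) (p := pG) this
  rw [ha0, map_one] at ha1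
  exact inv_mul_eq_one.mp ha1

theorem pushP_mk (x : A × Gt) :
    pushP f iG pG (QuotientGroup.mk x) = pG x.2 := rfl

theorem pushP_ker (q : (A × Gt) ⧸ pushN f iG pG) (hq : pushP f iG pG q = 1) :
    ∃ a : A, q = pushI f iG pG a := by
  obtain ⟨⟨b, g⟩, rfl⟩ := QuotientGroup.mk_surjective q
  rw [pushP_mk] at hq
  have hg : g ∈ MonoidHom.ker pG := hq
  rw [IsCentralExtension.ker_eq_range (i := iG)] at hg
  obtain ⟨a, rfl⟩ := hg
  refine ⟨b * f a, ?_⟩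
  have := push_mk_eq f iG pG a b 1
  rw [mul_one] at this
  exact this

variable (i : H →* G) (pH : Ht →* H) (it : Ht →* Gt)

/-- The canonical map `H̃ → i*(f_* G̃)`, `x ↦ (pH x, [(1, ĩ x)])`. -/
def theta (hit : pG.comp it = i.comp pH) :
    Ht →* ↥(pullbackSubgroup i (pushP f iG pG)) where
  toFun x := ⟨(pH x, QuotientGroup.mk (1, it x)), by
    show i (pH x) = pushP f iG pG (QuotientGroup.mk (1, it x))
    rw [pushP_mk]
    exact (DFunLike.congr_fun hit x).symm⟩
  map_one' := by
    apply Subtype.ext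
    simp
    exact (pushN f iG pG).one_mem
  map_mul' x y := by
    apply Subtype.ext
    refine Prod.ext (map_mul pH x y) ?_
    show (QuotientGroup.mk (1, it (x * y)) : (A × Gt) ⧸ pushN f iG pG) =
      QuotientGroup.mk (1, it x) * QuotientGroup.mk (1, it y)
    rw [← QuotientGroup.mk_mul, Prod.mk_mul_mk, one_mul, map_mul]

theorem theta_apply (hit : pG.comp it = i.comp pH) (x : Ht) :
    (theta f iG pG i pH it hit x : H × ((A × Gt) ⧸ pushN f iG pG)) =
      (pH x, QuotientGroup.mk (1, it x)) := rfl

theorem pullI_comm (a : A) (x : ↥(pullbackSubgroup i (pushP f iG pG))) :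
    Commute x (pullbackI i (pushI f iG pG) (pushP f iG pG)
      (fun b => pushP_pushI f iG pG b) a) := by
  apply Subtype.ext
  obtain ⟨⟨h, q⟩, hx⟩ := x
  obtain ⟨⟨b, g⟩, rfl⟩ := QuotientGroup.mk_surjective q
  refine Prod.ext ?_ ?_
  · show h * 1 = 1 * h
    rw [mul_one, one_mul]
  · show (QuotientGroup.mk (b, g) * QuotientGroup.mk (a, 1) :
      (A × Gt) ⧸ pushN f iG pG) = QuotientGroup.mk (a, 1) * QuotientGroup.mk (b, g)
    rw [← QuotientGroup.mk_mul, ← QuotientGroup.mk_mul, Prod.mk_mul_mk, Prod.mk_mul_mk,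
      mul_one, one_mul, mul_comm]

theorem pullI_injective : Function.Injective
    (pullbackI i (pushI f iG pG) (pushP f iG pG) (fun b => pushP_pushI f iG pG b)) := by
  intro a a' h
  have := congrArg (fun z => (((z : ↥(pullbackSubgroup i (pushP f iG pG))) :
    H × ((A × Gt) ⧸ pushN f iG pG)).2)) h
  exact pushI_injective f iG pG this

end AuxMoore

/-- discrete case of Proposition 1.9, Moore: with `(H̃, i_H, p_H)` and
`(G̃, i_G, p_G)` universal central extensions of `H` and `G`, `i : H →* G`, `ĩ` the lift
of `i` and `i_* : C_H →* C_G` the induced map on kernels, and `f : C_G →* A`, the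
pullback `i*(f_*G̃)` of the pushout extension `f_*G̃` along `i` splits (admits an
equivalence to the trivial central extension `H × A`) if and only if `f ∘ i_*` is the
trivial homomorphism. -/
theorem pullback_pushout_splits_iff {H G CH CG Ht Gt A : Type u}
    [Group H] [Group G] [CommGroup CH] [CommGroup CG] [Group Ht] [Group Gt] [CommGroup A]
    (iH : CH →* Ht) (pH : Ht →* H) (iG : CG →* Gt) (pG : Gt →* G)
    (hH : IsUniversalCentralExtension iH pH) (hG : IsUniversalCentralExtension iG pG)
    [IsCentralExtension iG pG]
    (i : H →* G) (it : Ht →* Gt) (hit : pG.comp it = i.comp pH)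
    (ist : CH →* CG) (hist : iG.comp ist = it.comp iH)
    (f : CG →* A) :
    (∃ φ : ↥(pullbackSubgroup i (pushP f iG pG)) →* H × A,
        φ.comp (pullbackI i (pushI f iG pG) (pushP f iG pG)
            (fun b => pushP_pushI f iG pG b)) = MonoidHom.inr H A ∧
        (MonoidHom.fst H A).comp φ = pullbackP i (pushP f iG pG)) ↔
      f.comp ist = 1 := by
  haveI hceH : IsCentralExtension iH pH := hH.1
  -- notation
  have hθiH : ∀ c : CH, theta f iG pG i pH it hit (iH c) =
      pullbackI i (pushI f iG pG) (pushP f iG pG)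
        (fun b => pushP_pushI f iG pG b) (f (ist c)) := by
    intro c
    apply Subtype.ext
    rw [theta_apply]
    refine Prod.ext ?_ ?_
    · show pH (iH c) = 1
      exact IsCentralExtension.p_i iH pH c
    · show (QuotientGroup.mk (1, it (iH c)) : (A × Gt) ⧸ pushN f iG pG) =
        QuotientGroup.mk (f (ist c), 1)
      have h1 : it (iH c) = iG (ist c) := by
        rw [← MonoidHom.comp_apply, ← hist, MonoidHom.comp_apply]
      rw [h1]
      have := push_mk_eq f iG pG (ist c) 1 1
      rw [mul_one, one_mul] at this
      exact this
  constructor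
  · rintro ⟨φ, hφ1, hφ2⟩
    -- use uniqueness of lifts into the trivial extension H × A
    obtain ⟨ψ, -, huniq⟩ := hH.2 A (H × A) (MonoidHom.inr H A) (MonoidHom.fst H A)
      (trivial_isCentralExtension H A)
    have hA : (MonoidHom.fst H A).comp (φ.comp (theta f iG pG i pH it hit)) = pH := by
      rw [← MonoidHom.comp_assoc, hφ2]
      ext x
      rfl
    have hB : (MonoidHom.fst H A).comp (pH.prod 1) = pH := by
      ext x
      rfl
    have heq : φ.comp (theta f iG pG i pH it hit) = pH.prod 1 :=
      (huniq _ hA).trans (huniq _ hB).symm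
    ext c
    have h1 : φ (theta f iG pG i pH it hit (iH c)) = (1, f (ist c)) := by
      rw [hθiH c, ← MonoidHom.comp_apply, hφ1]
      rfl
    have h2 : φ (theta f iG pG i pH it hit (iH c)) = (pH (iH c), 1) := by
      rw [← MonoidHom.comp_apply, heq]
      rfl
    have := h1.symm.trans h2
    have := congrArg Prod.snd this
    simpa using this
  · intro hf
    set θ := theta f iG pG i pH it hit with hθ
    set ι := pullbackI i (pushI f iG pG) (pushP f iG pG)
      (fun b => pushP_pushI f iG pG b) with hιdef
    have hθi : ∀ c : CH, θ (iH c) = 1 := by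
      intro c
      have hfc : f (ist c) = 1 := DFunLike.congr_fun hf c
      rw [hθiH c, hfc, map_one]
    -- the combined surjection Ψ : Ht × A →* pullback
    set Ψ := θ.noncommCoprod ι (fun m n => ((pullI_comm f iG pG i n (θ m))))
      with hΨdef
    have hΨ : ∀ x a, Ψ (x, a) = θ x * ι a := fun _ _ => rfl
    have hpullP_θ : ∀ x, pullbackP i (pushP f iG pG) (θ x) = pH x := fun _ => rfl
    have hpullP_ι : ∀ a, pullbackP i (pushP f iG pG) (ι a) = 1 := fun _ => rfl
    have hsurj : Function.Surjective Ψ := by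
      rintro ⟨⟨h, q⟩, hx⟩
      have hx' : i h = pushP f iG pG q := hx
      obtain ⟨x, hxh⟩ := IsCentralExtension.surj (i := iH) (p := pH) h
      set y : ↥(pullbackSubgroup i (pushP f iG pG)) := ⟨(h, q), hx⟩ * (θ x)⁻¹ with hy
      have hy1 : (y : H × ((A × Gt) ⧸ pushN f iG pG)).1 = 1 := by
        show h * (pH x)⁻¹ = 1
        rw [hxh, mul_inv_cancel]
      have hy2 : pushP f iG pG (y : H × ((A × Gt) ⧸ pushN f iG pG)).2 = 1 := by
        have := y.2
        rw [mem_pullbackSubgroup] at this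
        rw [← this, hy1, map_one]
      obtain ⟨a, ha⟩ := pushP_ker f iG pG _ hy2
      have hyι : y = ι a := by
        apply Subtype.ext
        refine Prod.ext ?_ ?_
        · rw [hy1]; rfl
        · rw [ha]; rfl
      refine ⟨(x, a), ?_⟩
      have hcomm : θ x * ι a = ι a * θ x := (pullI_comm f iG pG i a (θ x)).eq
      rw [hΨ, hcomm, ← hyι, hy]
      group
    have hιinj : Function.Injective ι := pullI_injective f iG pG i
    set g₀ : Ht × A →* H × A := pH.prodMap (MonoidHom.id A) with hg₀
    have hker : Ψ.ker ≤ g₀.ker := by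
      rintro ⟨x, a⟩ hxa
      have hxa' : θ x * ι a = 1 := hxa
      have h1 : pH x = 1 := by
        have := congrArg (pullbackP i (pushP f iG pG)) hxa'
        rw [map_mul, hpullP_θ, hpullP_ι, mul_one, map_one] at this
        exact this
      have hx2 : x ∈ MonoidHom.ker pH := h1
      rw [IsCentralExtension.ker_eq_range (i := iH)] at hx2
      obtain ⟨c, rfl⟩ := hx2
      rw [hθi c, one_mul] at hxa'
      have ha : a = 1 := hιinj (by rw [hxa', map_one])
      show (pH (iH c), a) = 1
      rw [h1, ha]
      rfl
    set φ := Ψ.liftOfRightInverse (Function.surjInv hsurj)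
      (Function.rightInverse_surjInv hsurj) ⟨g₀, hker⟩ with hφ
    have hkey : ∀ z, φ (Ψ z) = g₀ z := fun z =>
      Ψ.liftOfRightInverse_comp_apply _ _ ⟨g₀, hker⟩ z
    refine ⟨φ, ?_, ?_⟩
    · refine MonoidHom.ext fun a => ?_
      have h1 : ι a = Ψ (1, a) := by rw [hΨ, map_one, one_mul]
      show φ (ι a) = (1, a)
      rw [h1, hkey]
      show (pH 1, a) = (1, a)
      rw [map_one]
    · ext x
      obtain ⟨z, rfl⟩ := hsurj x
      show (φ (Ψ z)).1 = pullbackP i (pushP f iG pG) (Ψ z)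
      rw [hkey]
      show pH z.1 = pullbackP i (pushP f iG pG) (θ z.1 * ι z.2)
      rw [map_mul, hpullP_θ, hpullP_ι, mul_one]
end

section
/- Let k be a field, kˣ its multiplicative group, and A a commutative group. Let c : kˣ × kˣ → A be a bimultiplicative map satisfying c(s, 1-s) = 1 for all s ∈ kˣ with s ≠ 1. Then c is skew-symmetric: c(s,t)·c(t,s) = 1 for all s, t ∈ kˣ. -/
/-- if `c : kˣ × kˣ → A` is bimultiplicative and satisfies the Steinberg
relation `c(s, 1-s) = 1` for all `s ≠ 1`, then `c` is skew-symmetric: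
`c(s,t)·c(t,s) = 1` for all `s, t ∈ kˣ`. -/
theorem steinberg_symbol_skew_symmetric {k A : Type*} [Field k] [CommGroup A]
    (c : kˣ × kˣ → A)
    (hmul_left : ∀ r s t : kˣ, c (r * s, t) = c (r, t) * c (s, t))
    (hmul_right : ∀ r s t : kˣ, c (r, s * t) = c (r, s) * c (r, t))
    (hst : ∀ (s : kˣ) (hs : (s : k) ≠ 1),
      c (s, Units.mk0 (1 - (s : k)) (sub_ne_zero_of_ne (Ne.symm hs))) = 1) :
    ∀ s t : kˣ, c (s, t) * c (t, s) = 1 := by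
  have hone_left : ∀ t : kˣ, c (1, t) = 1 := by
    intro t
    have h := hmul_left 1 1 t
    rw [mul_one] at h
    exact (right_eq_mul.mp h)
  have hone_right : ∀ s : kˣ, c (s, 1) = 1 := by
    intro s
    have h := hmul_right s 1 1
    rw [mul_one] at h
    exact (right_eq_mul.mp h)
  have hinv_left : ∀ s t : kˣ, c (s⁻¹, t) = (c (s, t))⁻¹ := by
    intro s t
    have h := hmul_left s s⁻¹ t
    rw [mul_inv_cancel, hone_left] at h
    exact eq_inv_of_mul_eq_one_right h.symm
  have hinv_right : ∀ s t : kˣ, c (s, t⁻¹) = (c (s, t))⁻¹ := by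
    intro s t
    have h := hmul_right s t t⁻¹
    rw [mul_inv_cancel, hone_right] at h
    exact eq_inv_of_mul_eq_one_right h.symm
  have hneg : ∀ s : kˣ, c (s, -s) = 1 := by
    intro s
    by_cases hs : (s : k) = 1
    · have : s = 1 := Units.ext hs
      subst this
      exact hone_left _
    · have hs0 : (s : k) ≠ 0 := s.ne_zero
      have hs' : ((s⁻¹ : kˣ) : k) ≠ 1 := by
        rw [Units.val_inv_eq_inv_val]
        intro h
        exact hs (by rw [inv_eq_one] at h; exact h)
      set u := Units.mk0 (1 - (s : k)) (sub_ne_zero_of_ne (Ne.symm hs)) with hu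
      set v := Units.mk0 (1 - ((s⁻¹ : kˣ) : k)) (sub_ne_zero_of_ne (Ne.symm hs')) with hv
      have hv0 : (1 - ((s⁻¹ : kˣ) : k)) ≠ 0 := sub_ne_zero_of_ne (Ne.symm hs')
      have key : -s = u * v⁻¹ := by
        apply Units.ext
        rw [Units.val_mul, Units.val_neg, Units.val_inv_eq_inv_val, hu, hv]
        simp only [Units.val_mk0]
        rw [Units.val_inv_eq_inv_val] at hv0 ⊢
        rw [eq_comm, mul_inv_eq_iff_eq_mul₀ hv0]
        field_simp
        ring
      have h1 : c (s, u) = 1 := hst s hs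
      have h2 : c (s, v) = 1 := by
        have h3 : c (s⁻¹, v) = 1 := hst s⁻¹ hs'
        rw [hinv_left] at h3
        exact inv_eq_one.mp h3
      rw [key, hmul_right, h1, hinv_right, h2]
      simp
  intro s t
  have h := hneg (s * t)
  have e1 : -(s * t) = (-s) * t := by apply Units.ext; push_cast; ring
  have e2 : -(s * t) = s * (-t) := by apply Units.ext; push_cast; ring
  rw [hmul_left] at h
  have hA : c (s, -(s * t)) = c (s, t) := by
    rw [e1, hmul_right, hneg, one_mul]
  have hB : c (t, -(s * t)) = c (t, s) := by
    rw [e2, hmul_right, hneg, mul_one]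
  rw [hA, hB] at h
  exact h
end

section
/- (Redundancy in the relations of Theorem 2.6, Moore.) Let k be a field, kˣ its multiplicative group, A a commutative group, and b : kˣ × kˣ → A a function satisfying relation (1): b(st,r)·b(s,t) = b(s,tr)·b(t,r) and b(s,1) = b(1,s) = 1 for all r,s,t ∈ kˣ, and relation (4): b(s,t) = b(s,(1-s)t) for all s,t ∈ kˣ with s ≠ 1. Then relation (2): b(s,t) = b(t⁻¹,s) for all s,t ∈ kˣ, holds if and only if relation (3): b(s,t) = b(s,-st) for all s,t ∈ kˣ, holds. -/
/-- redundancy in the relations of Theorem 2.6, Moore: if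
`b : kˣ × kˣ → A` satisfies relation (1) (the normalized cocycle identities) and
relation (4) (`b(s,t) = b(s,(1-s)t)` for `s ≠ 1`), then relation (2)
(`b(s,t) = b(t⁻¹,s)`) holds if and only if relation (3) (`b(s,t) = b(s,-st)`) holds. -/
theorem steinberg_cocycle_relations_two_iff_three {k A : Type*} [Field k] [CommGroup A]
    (b : kˣ × kˣ → A)
    (h1 : ∀ r s t : kˣ, b (s * t, r) * b (s, t) = b (s, t * r) * b (t, r))
    (h1right : ∀ s : kˣ, b (s, 1) = 1)
    (h1left : ∀ s : kˣ, b (1, s) = 1)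
    (h4 : ∀ (s t : kˣ) (hs : (s : k) ≠ 1),
      b (s, t) = b (s, Units.mk0 (1 - (s : k)) (sub_ne_zero_of_ne (Ne.symm hs)) * t)) :
    (∀ s t : kˣ, b (s, t) = b (t⁻¹, s)) ↔ (∀ s t : kˣ, b (s, t) = b (s, -(s * t))) := by
  constructor
  · -- (2) → (3)
    intro h2 s t
    by_cases hs : (s : k) = 1
    · have hs1 : s = 1 := Units.ext hs
      subst hs1
      rw [h1left, h1left]
    · have hs0 : (s : k) ≠ 0 := s.ne_zero
      have hsinv : ((s⁻¹ : kˣ) : k) ≠ 1 := by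
        rw [Units.val_inv_eq_inv_val]
        intro h
        exact hs (by simpa using congrArg (fun x : k => x⁻¹) h)
      have hsinv0 : (1 : k) - ((s⁻¹ : kˣ) : k) ≠ 0 :=
        sub_ne_zero_of_ne (Ne.symm hsinv)
      set U : kˣ := Units.mk0 (1 - ((s⁻¹ : kˣ) : k)) (sub_ne_zero_of_ne (Ne.symm hsinv)) with hU
      set V : kˣ := Units.mk0 (1 - (s : k)) (sub_ne_zero_of_ne (Ne.symm hs)) with hV
      have key : V * (U⁻¹ * t) = -(s * t) := by
        apply Units.ext
        simp only [hU, hV, Units.val_mul, Units.val_neg, Units.val_inv_eq_inv_val,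
          Units.val_mk0]
        have hne : (1 : k) - ((s : k))⁻¹ ≠ 0 := by
          rw [← Units.val_inv_eq_inv_val]; exact hsinv0
        have e : (1 - (s : k)) = -(s : k) * (1 - ((s : k))⁻¹) := by
          rw [neg_mul, mul_sub, mul_one, mul_inv_cancel₀ hs0, neg_sub]
        rw [e, mul_assoc, mul_inv_cancel_left₀ hne, neg_mul]
      calc b (s, t) = b (t⁻¹, s) := h2 s t
        _ = b (s⁻¹, t⁻¹) := h2 t⁻¹ s
        _ = b (s⁻¹, U * t⁻¹) := h4 s⁻¹ t⁻¹ hsinv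
        _ = b ((U * t⁻¹)⁻¹, s⁻¹) := h2 s⁻¹ (U * t⁻¹)
        _ = b ((s⁻¹)⁻¹, (U * t⁻¹)⁻¹) := h2 (U * t⁻¹)⁻¹ s⁻¹
        _ = b (s, U⁻¹ * t) := by rw [inv_inv, mul_inv, inv_inv]
        _ = b (s, V * (U⁻¹ * t)) := h4 s (U⁻¹ * t) hs
        _ = b (s, -(s * t)) := by rw [key]
  · -- (3) → (2)
    intro h3 s t
    -- cocycle instances
    have c1 := h1 t (s⁻¹ * t⁻¹) s
    have c2 := h1 s s⁻¹ t⁻¹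
    have c3 := h1 (-1) s⁻¹ t⁻¹
    -- relation (3) instances
    have e3a := h3 t⁻¹ t
    have e3b := h3 s⁻¹ (t⁻¹ * s)
    have e3c := h3 (s⁻¹ * t⁻¹) (s * t)
    rw [show (t⁻¹ * t : kˣ) = 1 from inv_mul_cancel t] at e3a
    rw [show (s⁻¹ * (t⁻¹ * s) : kˣ) = t⁻¹ from by rw [mul_comm t⁻¹ s, inv_mul_cancel_left]] at e3b
    rw [show ((s⁻¹ * t⁻¹) * (s * t) : kˣ) = 1 from by rw [mul_mul_mul_comm, inv_mul_cancel, inv_mul_cancel, mul_one]] at e3c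
    rw [show (s⁻¹ * t⁻¹ * s : kˣ) = t⁻¹ from by rw [mul_comm s⁻¹ t⁻¹, inv_mul_cancel_right]] at c1
    rw [show (t⁻¹ * -1 : kˣ) = -t⁻¹ from by rw [mul_neg_one]] at c3
    rw [e3a, e3c] at c1
    rw [e3b] at c2
    -- now: c1 : b (t⁻¹, -1) * b (s⁻¹*t⁻¹, s) = b (s⁻¹*t⁻¹, -1) * b (s, t)
    --      c2 : b (s⁻¹*t⁻¹, s) * b (s⁻¹, t⁻¹) = b (s⁻¹, -t⁻¹) * b (t⁻¹, s)
    --      c3 : b (s⁻¹*t⁻¹, -1) * b (s⁻¹, t⁻¹) = b (s⁻¹, -t⁻¹) * b (t⁻¹, -1)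
    set P := b (t⁻¹, -1)
    set Q := b (s⁻¹ * t⁻¹, s)
    set R := b (s⁻¹ * t⁻¹, -1)
    set W := b (s⁻¹, t⁻¹)
    set Z := b (s⁻¹, -t⁻¹)
    set X := b (s, t)
    set Y := b (t⁻¹, s)
    have key : (R * W) * X = (R * W) * Y := by
      calc (R * W) * X = (R * X) * W := by
            simp only [mul_comm, mul_left_comm, mul_assoc]
        _ = (P * Q) * W := by rw [← c1]
        _ = (Q * W) * P := by
            simp only [mul_comm, mul_left_comm, mul_assoc]
        _ = (Z * Y) * P := by rw [c2]
        _ = (Z * P) * Y := by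
            simp only [mul_comm, mul_left_comm, mul_assoc]
        _ = (R * W) * Y := by rw [← c3]
    exact mul_left_cancel key
end

section
/- Let k be a field, kˣ its multiplicative group, and A a commutative group. Every bimultiplicative map c : kˣ × kˣ → A satisfying c(s,1-s) = 1 for all s ∈ kˣ with s ≠ 1 is an A-valued Steinberg cocycle on kˣ; that is, it satisfies all four relations: (1) c(st,r)·c(s,t) = c(s,tr)·c(t,r) and c(s,1) = c(1,s) = 1 for all r,s,t ∈ kˣ; (2) c(s,t) = c(t⁻¹,s) for all s,t ∈ kˣ; (3) c(s,t) = c(s,-st) for all s,t ∈ kˣ; (4) c(s,t) = c(s,(1-s)t) for all s,t ∈ kˣ with s ≠ 1. (Thus St°(kˣ,A) ⊆ St(kˣ,A).) -/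
/-- every bimultiplicative map `c : kˣ × kˣ → A` with `c(s, 1-s) = 1` for
`s ≠ 1` is an `A`-valued Steinberg cocycle on `kˣ`: it satisfies all four relations
(1)-(4).  Thus `St°(kˣ,A) ⊆ St(kˣ,A)`. -/
theorem bimultiplicative_steinberg_symbol_is_steinberg_cocycle {k A : Type*}
    [Field k] [CommGroup A]
    (c : kˣ × kˣ → A)
    (hmul_left : ∀ r s t : kˣ, c (r * s, t) = c (r, t) * c (s, t))
    (hmul_right : ∀ r s t : kˣ, c (r, s * t) = c (r, s) * c (r, t))
    (hst : ∀ (s : kˣ) (hs : (s : k) ≠ 1),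
      c (s, Units.mk0 (1 - (s : k)) (sub_ne_zero_of_ne (Ne.symm hs))) = 1) :
    (∀ r s t : kˣ, c (s * t, r) * c (s, t) = c (s, t * r) * c (t, r)) ∧
    (∀ s : kˣ, c (s, 1) = 1) ∧
    (∀ s : kˣ, c (1, s) = 1) ∧
    (∀ s t : kˣ, c (s, t) = c (t⁻¹, s)) ∧
    (∀ s t : kˣ, c (s, t) = c (s, -(s * t))) ∧
    (∀ (s t : kˣ) (hs : (s : k) ≠ 1),
      c (s, t) = c (s, Units.mk0 (1 - (s : k)) (sub_ne_zero_of_ne (Ne.symm hs)) * t)) := by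
  -- basic lemmas
  have h1 : ∀ s : kˣ, c (1, s) = 1 := by
    intro s
    have h := hmul_left 1 1 s
    rw [one_mul] at h
    exact (left_eq_mul.mp h)
  have h2 : ∀ s : kˣ, c (s, 1) = 1 := by
    intro s
    have h := hmul_right s 1 1
    rw [one_mul] at h
    exact (left_eq_mul.mp h)
  have hinvR : ∀ s t : kˣ, c (s, t⁻¹) = (c (s, t))⁻¹ := by
    intro s t
    have h := hmul_right s t t⁻¹
    rw [mul_inv_cancel, h2] at h
    exact (eq_inv_of_mul_eq_one_left (by rw [mul_comm]; exact h.symm))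
  have hinvL : ∀ s t : kˣ, c (s⁻¹, t) = (c (s, t))⁻¹ := by
    intro s t
    have h := hmul_left s s⁻¹ t
    rw [mul_inv_cancel, h1] at h
    exact (eq_inv_of_mul_eq_one_left (by rw [mul_comm]; exact h.symm))
  -- c (s, -s) = 1
  have hneg : ∀ s : kˣ, c (s, -s) = 1 := by
    intro s
    by_cases hs : (s : k) = 1
    · have : s = 1 := Units.ext (by simpa using hs)
      subst this
      exact h1 _
    · have hs' : ((s⁻¹ : kˣ) : k) ≠ 1 := by
        rw [Units.val_inv_eq_inv_val]
        intro h
        exact hs (by rw [← inv_inv (s : k), h, inv_one])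
      set a : kˣ := Units.mk0 (1 - (s : k)) (sub_ne_zero_of_ne (Ne.symm hs)) with ha
      set b : kˣ := Units.mk0 (1 - ((s⁻¹ : kˣ) : k)) (sub_ne_zero_of_ne (Ne.symm hs')) with hb
      have hab : -s = a * b⁻¹ := by
        apply Units.ext
        rw [Units.val_mul, Units.val_inv_eq_inv_val]
        simp only [ha, hb, Units.val_mk0, Units.val_neg, Units.val_inv_eq_inv_val]
        have hs0 : (s : k) ≠ 0 := s.ne_zero
        have hb0 : (1 : k) - (s : k)⁻¹ ≠ 0 := by
          simpa [Units.val_inv_eq_inv_val] using (sub_ne_zero_of_ne (Ne.symm hs'))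
        rw [← div_eq_mul_inv, eq_comm, div_eq_iff hb0]
        field_simp
        ring
      have hcb : c (s, b) = 1 := by
        have h := hmul_left s s⁻¹ b
        rw [mul_inv_cancel, h1, hst s⁻¹ hs'] at h
        rw [mul_one] at h
        exact h.symm
      rw [hab, hmul_right, hst s hs, hinvR, hcb]
      simp
  -- skew symmetry
  have hskew : ∀ s t : kˣ, c (s, t) * c (t, s) = 1 := by
    intro s t
    have key : c (s * t, -(s * t)) = 1 := hneg _
    rw [hmul_left] at key
    have e1 : c (s, -(s * t)) = c (s, t) := by
      rw [show -(s * t) = (-s) * t by rw [neg_mul], hmul_right, hneg, one_mul]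
    have e2 : c (t, -(s * t)) = c (t, s) := by
      rw [show -(s * t) = s * (-t) by rw [mul_neg], hmul_right, hneg, mul_one]
    rw [e1, e2] at key
    exact key
  refine ⟨?_, h2, h1, ?_, ?_, ?_⟩
  · intro r s t
    rw [hmul_left, hmul_right]
    exact (mul_rotate (c (s, t)) (c (s, r)) (c (t, r))).symm
  · intro s t
    rw [hinvL]
    exact eq_inv_of_mul_eq_one_left (hskew s t)
  · intro s t
    rw [show -(s * t) = (-s) * t by rw [neg_mul], hmul_right, hneg, one_mul]
  · intro s t hs
    rw [hmul_right, hst s hs, one_mul]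
end
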